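/- Wei duality for matroids: Let M be a matroid on a finite set E with |E| = n and rank k. Define f_i := max{|F| : F ⊆ E, ρ(F) = i} for 0 ≤ i ≤ k−1 and f*_j := max{|F| : F ⊆ E, ρ*(F) = j} for 0 ≤ j ≤ n−k−1, where ρ is the rank function of M and ρ* that of M*. Then the sets S := {n − f_i : 0 ≤ i ≤ k−1} and T := {f*_j + 1 : 0 ≤ j ≤ n−k−1} are disjoint and their union is {1,…,n}. -/

import Mathlib

open Finset

set_option linter.unusedSectionVars false

open Finset

section Wei

variable {E : Type*} [Fintype E] [DecidableEq E]

/-- max size of a set of rank `i`. -/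
private noncomputable def weiG (r : Finset E → ℕ) (i : ℕ) : ℕ :=
  sSup {m | ∃ F : Finset E, F.card = m ∧ r F = i}

/-- min rank of a set of size `s`. -/
private noncomputable def weiL (r : Finset E → ℕ) (s : ℕ) : ℕ :=
  sInf {t | ∃ F : Finset E, F.card = s ∧ r F = t}

variable {r : Finset E → ℕ}

private lemma weiMono (h1 : ∀ (X : Finset E) (e : E), r X ≤ r (insert e X)) :
    ∀ ⦃X Y : Finset E⦄, X ⊆ Y → r X ≤ r Y := by
  suffices H : ∀ m : ℕ, ∀ X Y : Finset E, X ⊆ Y → (Y \ X).card = m → r X ≤ r Y by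
    intro X Y h; exact H _ X Y h rfl
  intro m
  induction m with
  | zero =>
    intro X Y h hn
    have h2 : Y ⊆ X := Finset.sdiff_eq_empty_iff_subset.mp (Finset.card_eq_zero.mp hn)
    rw [Finset.Subset.antisymm h h2]
  | succ m ih =>
    intro X Y h hn
    obtain ⟨e, he⟩ : (Y \ X).Nonempty := Finset.card_pos.mp (by omega)
    have he' := Finset.mem_sdiff.mp he
    have hsub : insert e X ⊆ Y := Finset.insert_subset he'.1 h
    have hc : (Y \ insert e X).card = m := by
      rw [Finset.sdiff_insert, Finset.card_erase_of_mem he, hn]; omega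
    exact le_trans (h1 X e) (ih _ Y hsub hc)

private lemma weiLeAdd (h2 : ∀ (X : Finset E) (e : E), r (insert e X) ≤ r X + 1) :
    ∀ ⦃X Y : Finset E⦄, X ⊆ Y → r Y ≤ r X + (Y.card - X.card) := by
  suffices H : ∀ m : ℕ, ∀ X Y : Finset E, X ⊆ Y → (Y \ X).card = m →
      r Y ≤ r X + (Y.card - X.card) by
    intro X Y h; exact H _ X Y h rfl
  intro m
  induction m with
  | zero =>
    intro X Y h hn
    have h2' : Y ⊆ X := Finset.sdiff_eq_empty_iff_subset.mp (Finset.card_eq_zero.mp hn)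
    rw [Finset.Subset.antisymm h h2']
    simp
  | succ m ih =>
    intro X Y h hn
    obtain ⟨e, he⟩ : (Y \ X).Nonempty := Finset.card_pos.mp (by omega)
    have he' := Finset.mem_sdiff.mp he
    have hsub : insert e X ⊆ Y := Finset.insert_subset he'.1 h
    have hc : (Y \ insert e X).card = m := by
      rw [Finset.sdiff_insert, Finset.card_erase_of_mem he, hn]; omega
    have hcard : (insert e X).card = X.card + 1 := Finset.card_insert_of_notMem he'.2
    have hXY : X.card < Y.card := by
      have := Finset.card_le_card hsub
      omega
    have hih := ih _ Y hsub hc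
    have := h2 X e
    omega

private lemma weiIVT (h2 : ∀ (X : Finset E) (e : E), r (insert e X) ≤ r X + 1) :
    ∀ ⦃X Y : Finset E⦄, X ⊆ Y → ∀ i, r X ≤ i → i ≤ r Y →
      ∃ Z : Finset E, X ⊆ Z ∧ Z ⊆ Y ∧ r Z = i := by
  suffices H : ∀ m : ℕ, ∀ X Y : Finset E, X ⊆ Y → (Y \ X).card = m → ∀ i, r X ≤ i → i ≤ r Y →
      ∃ Z : Finset E, X ⊆ Z ∧ Z ⊆ Y ∧ r Z = i by
    intro X Y h; exact H _ X Y h rfl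
  intro m
  induction m with
  | zero =>
    intro X Y h hn i hXi hiY
    have h2' : Y ⊆ X := Finset.sdiff_eq_empty_iff_subset.mp (Finset.card_eq_zero.mp hn)
    have hXY : X = Y := Finset.Subset.antisymm h h2'
    subst hXY
    exact ⟨X, Finset.Subset.refl X, h, le_antisymm hXi hiY⟩
  | succ m ih =>
    intro X Y h hn i hXi hiY
    rcases eq_or_lt_of_le hXi with heq | hlt
    · exact ⟨X, Finset.Subset.refl X, h, heq⟩
    · obtain ⟨e, he⟩ : (Y \ X).Nonempty := Finset.card_pos.mp (by omega)
      have he' := Finset.mem_sdiff.mp he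
      have hsub : insert e X ⊆ Y := Finset.insert_subset he'.1 h
      have hc : (Y \ insert e X).card = m := by
        rw [Finset.sdiff_insert, Finset.card_erase_of_mem he, hn]; omega
      have hle : r (insert e X) ≤ i := le_trans (h2 X e) (by omega)
      obtain ⟨Z, hZ1, hZ2, hZ3⟩ := ih _ Y hsub hc i hle hiY
      exact ⟨Z, le_trans (Finset.subset_insert e X) hZ1, hZ2, hZ3⟩


-- local notation
private lemma weiG_bdd (r : Finset E → ℕ) (i : ℕ) :
    BddAbove {m | ∃ F : Finset E, F.card = m ∧ r F = i} := by
  refine ⟨Fintype.card E, ?_⟩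
  rintro m ⟨F, rfl, -⟩
  simpa using Finset.card_le_univ F

private lemma weiG_spec (h0 : r ∅ = 0) (h2 : ∀ (X : Finset E) (e : E), r (insert e X) ≤ r X + 1)
    {i : ℕ} (hi : i ≤ r univ) :
    ∃ F : Finset E, F.card = weiG r i ∧ r F = i := by
  have hne : {m | ∃ F : Finset E, F.card = m ∧ r F = i}.Nonempty := by
    obtain ⟨Z, -, -, hZ⟩ := weiIVT h2 (Finset.empty_subset univ) i (by omega) hi
    exact ⟨Z.card, Z, rfl, hZ⟩
  exact Nat.sSup_mem hne (weiG_bdd r i)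

private lemma weiG_max {i : ℕ} {F : Finset E} (hF : r F = i) : F.card ≤ weiG r i :=
  le_csSup (weiG_bdd r i) ⟨F, rfl, hF⟩

private lemma weiG_lt (h0 : r ∅ = 0) (h2 : ∀ (X : Finset E) (e : E), r (insert e X) ≤ r X + 1)
    {i : ℕ} (hi : i < r univ) : weiG r i < Fintype.card E := by
  obtain ⟨F, hFc, hFr⟩ := weiG_spec h0 h2 (le_of_lt hi)
  have hne : F ≠ univ := by rintro rfl; omega
  have := Finset.card_lt_card (Finset.ssubset_univ_iff.mpr hne)
  rwa [Finset.card_univ, hFc] at this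

private lemma weiL_spec {s : ℕ} (hs : s ≤ Fintype.card E) :
    ∃ F : Finset E, F.card = s ∧ r F = weiL r s := by
  have hne : {t | ∃ F : Finset E, F.card = s ∧ r F = t}.Nonempty := by
    obtain ⟨F, -, hF⟩ := Finset.exists_subset_card_eq (s := (univ : Finset E)) (n := s) (by simpa using hs)
    exact ⟨r F, F, hF, rfl⟩
  obtain ⟨F, hF, hr⟩ := Nat.sInf_mem hne
  exact ⟨F, hF, hr⟩

private lemma weiL_le {s : ℕ} {F : Finset E} (hF : F.card = s) : weiL r s ≤ r F :=
  Nat.sInf_le ⟨F, hF, rfl⟩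

private lemma weiL_mono (h1 : ∀ (X : Finset E) (e : E), r X ≤ r (insert e X))
    {s t : ℕ} (hst : s ≤ t) (ht : t ≤ Fintype.card E) : weiL r s ≤ weiL r t := by
  obtain ⟨F, hFc, hFr⟩ := weiL_spec (r := r) ht
  obtain ⟨G, hGF, hGc⟩ := Finset.exists_subset_card_eq (s := F) (n := s) (by omega)
  calc weiL r s ≤ r G := weiL_le hGc
    _ ≤ r F := weiMono h1 hGF
    _ = weiL r t := hFr

private lemma weiL_step (h2 : ∀ (X : Finset E) (e : E), r (insert e X) ≤ r X + 1)
    {s : ℕ} (hs : s + 1 ≤ Fintype.card E) : weiL r (s + 1) ≤ weiL r s + 1 := by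
  obtain ⟨F, hFc, hFr⟩ := weiL_spec (r := r) (by omega : s ≤ Fintype.card E)
  have hne : F ≠ univ := by
    intro h
    rw [h, Finset.card_univ] at hFc
    omega
  obtain ⟨e, he⟩ : ∃ e, e ∉ F := by
    by_contra hc
    push_neg at hc
    exact hne (Finset.eq_univ_iff_forall.mpr hc)
  have hc : (insert e F).card = s + 1 := by rw [Finset.card_insert_of_notMem he, hFc]
  calc weiL r (s + 1) ≤ r (insert e F) := weiL_le hc
    _ ≤ r F + 1 := h2 F e
    _ = weiL r s + 1 := by rw [hFr]

private lemma weiL_zero (h0 : r ∅ = 0) : weiL r 0 = 0 :=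
  le_antisymm (le_trans (weiL_le Finset.card_empty) (le_of_eq h0)) (Nat.zero_le _)

private lemma weiL_univ : weiL r (Fintype.card E) = r univ := by
  obtain ⟨F, hFc, hFr⟩ := weiL_spec (r := r) (le_refl _)
  rw [← hFr, (Finset.card_eq_iff_eq_univ F).mp hFc]

private lemma weiG_jump (h0 : r ∅ = 0) (h1 : ∀ (X : Finset E) (e : E), r X ≤ r (insert e X))
    (h2 : ∀ (X : Finset E) (e : E), r (insert e X) ≤ r X + 1)
    {i : ℕ} (hi : i < r univ) :
    weiG r i < Fintype.card E ∧ weiL r (weiG r i) = i ∧ weiL r (weiG r i + 1) = i + 1 := by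
  have hlt := weiG_lt h0 h2 hi
  obtain ⟨F, hFc, hFr⟩ := weiG_spec h0 h2 (le_of_lt hi)
  set s := weiG r i with hs
  -- upper bound on weiL (s+1)
  have hup : weiL r (s + 1) ≤ i + 1 := by
    have h := weiL_step h2 (by omega : s + 1 ≤ Fintype.card E)
    have h' : weiL r s ≤ i := le_trans (weiL_le hFc) (le_of_eq hFr)
    omega
  -- lower bound: no set of size s+1 has rank ≤ i
  have hlow : i + 1 ≤ weiL r (s + 1) := by
    by_contra hcon
    push_neg at hcon
    obtain ⟨G, hGc, hGr⟩ := weiL_spec (r := r) (by omega : s + 1 ≤ Fintype.card E)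
    have hGi : r G ≤ i := by omega
    obtain ⟨Z, hGZ, -, hZr⟩ := weiIVT h2 (Finset.subset_univ G) i hGi (le_of_lt hi)
    have := Finset.card_le_card hGZ
    have := weiG_max hZr
    omega
  have hLs1 : weiL r (s + 1) = i + 1 := le_antisymm hup hlow
  have hLs : weiL r s = i := by
    have h := weiL_step h2 (by omega : s + 1 ≤ Fintype.card E)
    have h' : weiL r s ≤ i := le_trans (weiL_le hFc) (le_of_eq hFr)
    omega
  exact ⟨hlt, hLs, hLs1⟩

private lemma weiG_recover (h0 : r ∅ = 0) (h1 : ∀ (X : Finset E) (e : E), r X ≤ r (insert e X))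
    (h2 : ∀ (X : Finset E) (e : E), r (insert e X) ≤ r X + 1)
    {s : ℕ} (hs : s + 1 ≤ Fintype.card E) (hj : weiL r (s + 1) = weiL r s + 1) :
    weiL r s < r univ ∧ weiG r (weiL r s) = s := by
  set i := weiL r s with hi
  have hik : i < r univ := by
    have h := weiL_mono h1 hs (le_refl (Fintype.card E))
    rw [weiL_univ] at h
    omega
  refine ⟨hik, le_antisymm ?_ ?_⟩
  · -- weiG i ≤ s
    by_contra hcon
    push_neg at hcon
    obtain ⟨F, hFc, hFr⟩ := weiG_spec h0 h2 (le_of_lt hik)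
    -- F has card = weiG i ≥ s+1, shrink to size s+1
    obtain ⟨G, hGF, hGc⟩ := Finset.exists_subset_card_eq (s := F) (n := s + 1) (by omega)
    have ha : weiL r (s + 1) ≤ r G := weiL_le hGc
    have hb := weiMono h1 hGF
    omega
  · -- s ≤ weiG i
    obtain ⟨F, hFc, hFr⟩ := weiL_spec (r := r) (by omega : s ≤ Fintype.card E)
    exact hFc ▸ weiG_max (hFr.trans hi.symm)


end Wei

/-- Wei duality for matroids: with `S = {n - f_i : 0 ≤ i ≤ k-1}` and
`T = {f*_j + 1 : 0 ≤ j ≤ n-k-1}`, the sets `S` and `T` are disjoint and their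
union is `{1, …, n}`. -/
theorem matroid_wei_duality {E : Type*} [Fintype E] [DecidableEq E]
    (ρ : Finset E → ℕ)
    (hmono : ∀ X Y : Finset E, X ⊆ Y → ρ X ≤ ρ Y)
    (hcard : ∀ X : Finset E, ρ X ≤ X.card)
    (hsubmod : ∀ X Y : Finset E, ρ (X ∪ Y) + ρ (X ∩ Y) ≤ ρ X + ρ Y) :
    let n := Fintype.card E
    let k := ρ univ
    let ρd : Finset E → ℕ := fun X => X.card + ρ (univ \ X) - ρ univ
    let f : ℕ → ℕ := fun i => sSup {m | ∃ F : Finset E, F.card = m ∧ ρ F = i}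
    let fd : ℕ → ℕ := fun j => sSup {m | ∃ F : Finset E, F.card = m ∧ ρd F = j}
    let S : Finset ℕ := (Finset.range k).image (fun i => n - f i)
    let T : Finset ℕ := (Finset.range (n - k)).image (fun j => fd j + 1)
    Disjoint S T ∧ S ∪ T = Finset.Icc 1 n := by
  intro n k ρd f fd S T
  have hndef : n = Fintype.card E := rfl
  have hkdef : k = ρ univ := rfl
  have hSdef : S = (Finset.range k).image (fun i => n - f i) := rfl
  have hTdef : T = (Finset.range (n - k)).image (fun j => fd j + 1) := rfl
  have hf : ∀ i, f i = weiG ρ i := fun i => rfl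
  have hfd : ∀ j, fd j = weiG ρd j := fun j => rfl
  -- basic facts about ρ
  have hρ0 : ρ ∅ = 0 := Nat.le_zero.mp (by simpa using hcard ∅)
  have hρ1 : ∀ (X : Finset E) (e : E), ρ X ≤ ρ (insert e X) :=
    fun X e => hmono X (insert e X) (Finset.subset_insert e X)
  have hρ2 : ∀ (X : Finset E) (e : E), ρ (insert e X) ≤ ρ X + 1 := by
    intro X e
    have h := hsubmod {e} X
    have h1 : ρ {e} ≤ 1 := by simpa using hcard {e}
    have h2 : insert e X = {e} ∪ X := by rw [Finset.insert_eq]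
    rw [h2]
    omega
  have hcardn : ∀ X : Finset E, X.card ≤ n := fun X => by
    simpa [hndef] using Finset.card_le_univ X
  have hcs : ∀ X : Finset E, (univ \ X).card = n - X.card := fun X => by
    rw [Finset.card_sdiff_of_subset (Finset.subset_univ X), Finset.card_univ]
  have hkn : k ≤ n := by
    have h := hcard univ
    rw [Finset.card_univ] at h
    omega
  have hk : ∀ X : Finset E, k ≤ X.card + ρ (univ \ X) := by
    intro X
    have h := weiLeAdd hρ2 (Finset.subset_univ (univ \ X))
    rw [Finset.card_univ, hcs X] at h
    have := hcardn X
    omega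
  have hd_eq : ∀ X : Finset E, ρd X + k = X.card + ρ (univ \ X) := by
    intro X
    have h1 : ρd X = X.card + ρ (univ \ X) - ρ univ := rfl
    have := hk X
    omega
  -- basic facts about the dual rank ρd
  have hd0 : ρd ∅ = 0 := by
    have h := hd_eq ∅
    rw [Finset.card_empty, Finset.sdiff_empty] at h
    omega
  have hdu : ρd univ = n - k := by
    have h := hd_eq univ
    rw [Finset.card_univ, Finset.sdiff_self, hρ0] at h
    omega
  have hd1 : ∀ (X : Finset E) (e : E), ρd X ≤ ρd (insert e X) := by
    intro X e
    by_cases he : e ∈ X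
    · rw [Finset.insert_eq_self.mpr he]
    · have h1 := hd_eq X
      have h2 := hd_eq (insert e X)
      have hc : (insert e X).card = X.card + 1 := Finset.card_insert_of_notMem he
      have hu : univ \ insert e X = (univ \ X).erase e := Finset.sdiff_insert univ X e
      have he2 : e ∈ univ \ X := Finset.mem_sdiff.mpr ⟨Finset.mem_univ e, he⟩
      have hr : ρ (univ \ X) ≤ ρ ((univ \ X).erase e) + 1 := by
        have h3 := hρ2 ((univ \ X).erase e) e
        rwa [Finset.insert_erase he2] at h3
      rw [hu] at h2
      omega
  have hd2 : ∀ (X : Finset E) (e : E), ρd (insert e X) ≤ ρd X + 1 := by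
    intro X e
    by_cases he : e ∈ X
    · rw [Finset.insert_eq_self.mpr he]; omega
    · have h1 := hd_eq X
      have h2 := hd_eq (insert e X)
      have hc : (insert e X).card = X.card + 1 := Finset.card_insert_of_notMem he
      have hu : univ \ insert e X = (univ \ X).erase e := Finset.sdiff_insert univ X e
      have hr : ρ ((univ \ X).erase e) ≤ ρ (univ \ X) :=
        hmono _ _ (Finset.erase_subset e (univ \ X))
      rw [hu] at h2
      omega
  -- the duality identity between the two "min rank at given size" functions
  have hld : ∀ m : ℕ, m ≤ n → weiL ρd m + k = m + weiL ρ (n - m) := by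
    intro m hm
    apply le_antisymm
    · obtain ⟨G, hGc, hGr⟩ := weiL_spec (r := ρ) (show n - m ≤ Fintype.card E by omega)
      have hFc : (univ \ G).card = m := by rw [hcs G, hGc]; omega
      have hFF : univ \ (univ \ G) = G := by
        rw [Finset.sdiff_sdiff_self_left, Finset.univ_inter]
      have h1 := hd_eq (univ \ G)
      rw [hFF, hFc] at h1
      have h2 : weiL ρd m ≤ ρd (univ \ G) := weiL_le hFc
      omega
    · obtain ⟨F, hFc, hFr⟩ := weiL_spec (r := ρd) (show m ≤ Fintype.card E by omega)
      have h1 := hd_eq F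
      have h2 : weiL ρ (n - m) ≤ ρ (univ \ F) := weiL_le (by rw [hcs F, hFc])
      omega
  -- membership characterization for S : reflected jumps of weiL ρ
  have hSmem : ∀ m : ℕ, m ∈ S ↔
      (1 ≤ m ∧ m ≤ n ∧ weiL ρ (n - m + 1) = weiL ρ (n - m) + 1) := by
    intro m
    rw [hSdef]
    simp only [Finset.mem_image, Finset.mem_range]
    constructor
    · rintro ⟨i, hi, rfl⟩
      have hik : i < ρ univ := by omega
      obtain ⟨hlt, hLs, hLs1⟩ := weiG_jump hρ0 hρ1 hρ2 hik
      have hfi := hf i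
      refine ⟨by omega, by omega, ?_⟩
      have he1 : n - (n - f i) = f i := by omega
      rw [he1, hfi, hLs1, hLs]
    · rintro ⟨h1m, hmn, hj⟩
      obtain ⟨hik, hgi⟩ := weiG_recover hρ0 hρ1 hρ2
        (show n - m + 1 ≤ Fintype.card E by omega) hj
      refine ⟨weiL ρ (n - m), by omega, ?_⟩
      rw [hf, hgi]
      omega
  -- membership characterization for T : jumps of weiL ρd
  have hTmem : ∀ m : ℕ, m ∈ T ↔
      (1 ≤ m ∧ m ≤ n ∧ weiL ρd m = weiL ρd (m - 1) + 1) := by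
    intro m
    rw [hTdef]
    simp only [Finset.mem_image, Finset.mem_range]
    constructor
    · rintro ⟨j, hj, rfl⟩
      have hjk : j < ρd univ := by rw [hdu]; omega
      obtain ⟨hlt, hLs, hLs1⟩ := weiG_jump hd0 hd1 hd2 hjk
      have hfj := hfd j
      refine ⟨by omega, by omega, ?_⟩
      rw [Nat.add_sub_cancel, hfj, hLs1, hLs]
    · rintro ⟨h1m, hmn, hj⟩
      have hs1 : m - 1 + 1 = m := by omega
      obtain ⟨hjk, hgj⟩ := weiG_recover hd0 hd1 hd2
        (show m - 1 + 1 ≤ Fintype.card E by omega) (by rw [hs1]; exact hj)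
      rw [hdu] at hjk
      refine ⟨weiL ρd (m - 1), by omega, ?_⟩
      rw [hfd, hgj]
      omega
  -- the dichotomy
  have hdi : ∀ m : ℕ, 1 ≤ m → m ≤ n →
      ((weiL ρ (n - m + 1) = weiL ρ (n - m) + 1) ↔
        ¬ (weiL ρd m = weiL ρd (m - 1) + 1)) := by
    intro m h1m hmn
    have e1 := hld m hmn
    have e2 := hld (m - 1) (by omega)
    have hnm : n - (m - 1) = n - m + 1 := by omega
    rw [hnm] at e2
    have hmono1 : weiL ρ (n - m) ≤ weiL ρ (n - m + 1) :=
      weiL_mono hρ1 (by omega) (by omega)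
    have hstep1 : weiL ρ (n - m + 1) ≤ weiL ρ (n - m) + 1 := weiL_step hρ2 (by omega)
    omega
  constructor
  · rw [Finset.disjoint_left]
    intro m hmS hmT
    obtain ⟨h1, h2, h3⟩ := (hSmem m).mp hmS
    obtain ⟨-, -, h4⟩ := (hTmem m).mp hmT
    exact ((hdi m h1 h2).mp h3) h4
  · ext m
    rw [Finset.mem_union, Finset.mem_Icc, hSmem, hTmem]
    constructor
    · rintro (⟨h1, h2, -⟩ | ⟨h1, h2, -⟩) <;> exact ⟨h1, h2⟩
    · rintro ⟨h1, h2⟩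
      by_cases hj : weiL ρd m = weiL ρd (m - 1) + 1
      · exact Or.inr ⟨h1, h2, hj⟩
      · exact Or.inl ⟨h1, h2, (hdi m h1 h2).mpr hj⟩
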